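/- Let d ≥ 2 be an integer, 1 < α < 2, 0 < γ ≤ 2. There exists a constant N > 0, depending only on d, α, γ, such that for every nonnegative f ∈ C_c(ℝ^{d+1}), every (t,x) ∈ ℝ × ℝ^d and every ρ > 0, P_γ(1_{C_ρ(t,x)} f)(t,x) ≤ N ρ^{αγ/2} M f(t,x). -/

import Mathlib

open MeasureTheory ENNReal Set Filter

noncomputable section

/-- The spatial space `ℝ^d`. -/
abbrev Spc (d : ℕ) := EuclideanSpace ℝ (Fin d)

/-- Parabolic cylinder `C_ρ(t,x) = {(s,y) : t ≤ s ≤ t + ρ^α, |y - x| ≤ ρ}`. -/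
def cylP (d : ℕ) (α ρ t : ℝ) (x : Spc d) : Set (ℝ × Spc d) :=
  {p | t ≤ p.1 ∧ p.1 ≤ t + ρ ^ α ∧ dist p.2 x ≤ ρ}

/-- Average of `f` over the parabolic cylinder `C_ρ(t,x)`. -/
def cylAvg (d : ℕ) (α ρ t : ℝ) (x : Spc d) (f : ℝ × Spc d → ℝ≥0∞) : ℝ≥0∞ :=
  (volume (cylP d α ρ t x))⁻¹ * ∫⁻ p in cylP d α ρ t x, f p

/-- Parabolic Morrey norm `‖v‖_{E_q}`. -/
def morreyE (d : ℕ) (α q : ℝ) (v : ℝ × Spc d → ℝ≥0∞) : ℝ≥0∞ :=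
  ⨆ (ρ : ℝ) (_ : 0 < ρ) (t : ℝ) (x : Spc d),
    ENNReal.ofReal ρ * (cylAvg d α ρ t x (fun p => v p ^ q)) ^ (1 / q)

/-- Elliptic Morrey norm `‖w‖_{M_q}` on `ℝ^d`. -/
def morreyM (d : ℕ) (q : ℝ) (w : Spc d → ℝ≥0∞) : ℝ≥0∞ :=
  ⨆ (ρ : ℝ) (_ : 0 < ρ) (x : Spc d),
    ENNReal.ofReal ρ *
      ((volume (Metric.closedBall x ρ))⁻¹ *
        ∫⁻ y in Metric.closedBall x ρ, w y ^ q) ^ (1 / q)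

/-- Fractional (parabolic) maximal function `M_β f(t,x)`. -/
def maxFun (d : ℕ) (α β : ℝ) (f : ℝ × Spc d → ℝ≥0∞) (t : ℝ) (x : Spc d) : ℝ≥0∞ :=
  ⨆ (ρ : ℝ) (_ : 0 < ρ), ENNReal.ofReal (ρ ^ β) * cylAvg d α ρ t x f

/-- Uncentered parabolic maximal function `M̂ f(z)`, sup over all parabolic
cylinders containing `z`. -/
def hatM (d : ℕ) (α : ℝ) (f : ℝ × Spc d → ℝ≥0∞) (z : ℝ × Spc d) : ℝ≥0∞ :=
  ⨆ (ρ : ℝ) (_ : 0 < ρ) (t : ℝ) (x : Spc d) (_ : z ∈ cylP d α ρ t x),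
    cylAvg d α ρ t x f

/-- The kernel `p_γ(s,y) = 1_{s>0} s^{γ/2} min(|y|^{-d-α}, s^{-(d+α)/α})`. -/
def pKer (d : ℕ) (α γ : ℝ) (s : ℝ) (y : Spc d) : ℝ≥0∞ :=
  if 0 < s then
    (if s ^ (1 / α) ≤ ‖y‖ then ENNReal.ofReal (s ^ (γ / 2) * ‖y‖ ^ (-(d : ℝ) - α))
     else ENNReal.ofReal (s ^ (γ / 2 - ((d : ℝ) + α) / α)))
  else 0

/-- `P_γ f(t,x) = ∫ p_γ(s,y) f(t+s, x+y) dy ds`. -/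
def Pop (d : ℕ) (α γ : ℝ) (f : ℝ × Spc d → ℝ≥0∞) (t : ℝ) (x : Spc d) : ℝ≥0∞ :=
  ∫⁻ p : ℝ × Spc d, pKer d α γ p.1 p.2 * f (t + p.1, x + p.2)

/-- `P*_γ f(t,x) = ∫ p_γ(s,y) f(t-s, x+y) dy ds`. -/
def PopStar (d : ℕ) (α γ : ℝ) (f : ℝ × Spc d → ℝ≥0∞) (t : ℝ) (x : Spc d) : ℝ≥0∞ :=
  ∫⁻ p : ℝ × Spc d, pKer d α γ p.1 p.2 * f (t - p.1, x + p.2)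


/-- near-field bound for `P_γ` applied to `f` cut off inside the cylinder
`C_ρ(t,x)`: `P_γ(1_{C_ρ(t,x)} f)(t,x) ≤ N ρ^{αγ/2} M f(t,x)`. -/
lemma cylP_prod (d : ℕ) (α r t : ℝ) (x : Spc d) :
    cylP d α r t x = Set.Icc t (t + r ^ α) ×ˢ Metric.closedBall x r := by
  ext p
  simp only [cylP, Set.mem_setOf_eq, Set.mem_prod, Set.mem_Icc, Metric.mem_closedBall]
  tauto

lemma vol_cylP (d : ℕ) (α t : ℝ) (x : Spc d) {r : ℝ} (hr : 0 < r) :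
    volume (cylP d α r t x) =
      ENNReal.ofReal (r ^ α) *
        (ENNReal.ofReal (r ^ d) * volume (Metric.ball (0 : Spc d) 1)) := by
  rw [cylP_prod, MeasureTheory.Measure.volume_eq_prod, Measure.prod_prod, Real.volume_Icc,
    Measure.addHaar_closedBall _ _ hr.le, finrank_euclideanSpace_fin, add_sub_cancel_left]

lemma ker_le (d : ℕ) {α γ : ℝ} (hα : 1 < α) (hγ1 : 0 < γ) {s : ℝ} (hs : 0 < s) (y : Spc d) :
    pKer d α γ s y ≤
      ENNReal.ofReal ((max (s ^ (1 / α)) ‖y‖) ^ (α * γ / 2 - d - α)) := by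
  have hα0 : 0 < α := lt_trans one_pos hα
  have hsa : 0 < s ^ (1 / α) := Real.rpow_pos_of_pos hs _
  rw [pKer, if_pos hs]
  split_ifs with h
  · rw [max_eq_right h]
    have hy : 0 < ‖y‖ := hsa.trans_le h
    apply ENNReal.ofReal_le_ofReal
    rw [show α * γ / 2 - (d : ℝ) - α = α * γ / 2 + (-(d : ℝ) - α) by ring,
      Real.rpow_add hy]
    apply mul_le_mul_of_nonneg_right _ (Real.rpow_nonneg hy.le _)
    calc s ^ (γ / 2) = (s ^ (1 / α)) ^ (α * γ / 2) := by
          rw [← Real.rpow_mul hs.le]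
          congr 1
          field_simp
      _ ≤ ‖y‖ ^ (α * γ / 2) := Real.rpow_le_rpow hsa.le h (by positivity)
  · rw [max_eq_left (not_le.mp h).le]
    apply le_of_eq
    congr 1
    rw [← Real.rpow_mul hs.le]
    congr 1
    field_simp
    ring


theorem stmt_2 (d : ℕ) (hd : 2 ≤ d) (α γ : ℝ) (hα1 : 1 < α) (hα2 : α < 2)
    (hγ1 : 0 < γ) (hγ2 : γ ≤ 2) :
    ∃ N : ℝ, 0 < N ∧
      ∀ (f : ℝ × Spc d → ℝ), Continuous f → HasCompactSupport f → (∀ z, 0 ≤ f z) →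
      ∀ (t : ℝ) (x : Spc d) (ρ : ℝ), 0 < ρ →
      Pop d α γ
          (fun z => Set.indicator (cylP d α ρ t x) (fun w => ENNReal.ofReal (f w)) z) t x ≤
        ENNReal.ofReal (N * ρ ^ (α * γ / 2)) *
          maxFun d α 0 (fun z => ENNReal.ofReal (f z)) t x := by
  have hα0 : 0 < α := lt_trans one_pos hα1
  set e : ℝ := α * γ / 2 - d - α with he_def
  have hd2 : (2 : ℝ) ≤ (d : ℝ) := by exact_mod_cast hd
  have he : e ≤ 0 := by
    have h := mul_le_mul_of_nonneg_left hγ2 hα0.le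
    rw [he_def]; linarith
  have hag : 0 < α * γ / 2 := by positivity
  set w : ℝ := (2⁻¹ : ℝ) ^ (α * γ / 2) with hw_def
  have hw0 : 0 < w := Real.rpow_pos_of_pos (by norm_num) _
  have hw1 : w < 1 := Real.rpow_lt_one (by norm_num) (by norm_num) hag
  set B : ℝ≥0∞ := volume (Metric.ball (0 : Spc d) 1) with hB_def
  have hB0 : 0 < B := Metric.measure_ball_pos _ _ one_pos
  have hBt : B ≠ ⊤ := measure_ball_lt_top.ne
  set c2 : ℝ := (2⁻¹ : ℝ) ^ e with hc2_def
  have hc20 : 0 < c2 := Real.rpow_pos_of_pos (by norm_num) _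
  have h1w : 0 < 1 - w := by linarith
  refine ⟨c2 * (1 - w)⁻¹ * B.toReal, by
      have hh := ENNReal.toReal_pos hB0.ne' hBt
      have hh2 : 0 < (1 - w)⁻¹ := inv_pos.mpr h1w
      positivity, ?_⟩
  intro f hf hfc hf0 t x ρ hρ
  set M : ℝ≥0∞ := maxFun d α 0 (fun z => ENNReal.ofReal (f z)) t x with hM_def
  set fof : ℝ × Spc d → ℝ≥0∞ := fun p => ENNReal.ofReal (f (t + p.1, x + p.2)) with hfof_def
  have hcont : Continuous (fun p : ℝ × Spc d => (t + p.1, x + p.2)) :=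
    (continuous_const.add continuous_fst).prodMk (continuous_const.add continuous_snd)
  have hfof_meas : Measurable fof :=
    ENNReal.measurable_ofReal.comp ((hf.comp hcont).measurable)
  set a : ℕ → ℝ := fun k => ρ * (2⁻¹ : ℝ) ^ k with ha_def
  have ha : ∀ k, 0 < a k := fun k => by positivity
  set T : ℕ → Set (ℝ × Spc d) :=
    fun k => Set.Ioc 0 ((a k) ^ α) ×ˢ Metric.closedBall 0 (a k) with hT_def
  have hT_meas : ∀ k, MeasurableSet (T k) :=
    fun k => measurableSet_Ioc.prod measurableSet_closedBall
  set G : ℕ → (ℝ × Spc d) → ℝ≥0∞ :=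
    fun k => (T k).indicator (fun p => ENNReal.ofReal ((a (k + 1)) ^ e) * fof p) with hG_def
  -- pointwise bound
  have hpt : ∀ p : ℝ × Spc d,
      pKer d α γ p.1 p.2 *
        Set.indicator (cylP d α ρ t x) (fun w => ENNReal.ofReal (f w)) (t + p.1, x + p.2)
      ≤ ∑' k, G k p := by
    rintro ⟨s, y⟩
    by_cases hs : 0 < s
    swap
    · simp [pKer, hs]
    by_cases hin : (t + s, x + y) ∈ cylP d α ρ t x
    swap
    · rw [Set.indicator_of_notMem hin, mul_zero]; exact zero_le
    rw [Set.indicator_of_mem hin]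
    obtain ⟨h1, h2, h3⟩ := hin
    have h2' : t + s ≤ t + ρ ^ α := h2
    have h3' : dist (x + y) x ≤ ρ := h3
    have hsρ : s ≤ ρ ^ α := by linarith
    have hyρ : ‖y‖ ≤ ρ := by
      have hdd : dist (x + y) x = ‖y‖ := by
        rw [dist_eq_norm]; congr 1; abel
      linarith [hdd ▸ h3']
    set q : ℝ := max (s ^ (1 / α)) ‖y‖ with hq_def
    have hq0 : 0 < q := lt_of_lt_of_le (Real.rpow_pos_of_pos hs _) (le_max_left _ _)
    have hqρ : q ≤ ρ := by
      apply max_le _ hyρ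
      calc s ^ (1 / α) ≤ (ρ ^ α) ^ (1 / α) :=
            Real.rpow_le_rpow hs.le hsρ (by positivity)
        _ = ρ := by
            rw [← Real.rpow_mul hρ.le, mul_one_div_cancel hα0.ne', Real.rpow_one]
    have hex : ∃ n : ℕ, a n < q := by
      obtain ⟨n, hn⟩ := exists_pow_lt_of_lt_one (div_pos hq0 hρ) (by norm_num : (2⁻¹ : ℝ) < 1)
      exact ⟨n, by rw [ha_def]; dsimp only; rw [mul_comm]; exact (lt_div_iff₀ hρ).mp hn⟩
    have hm0 : Nat.find hex ≠ 0 := by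
      intro h0
      have := Nat.find_spec hex
      rw [h0] at this
      simp only [ha_def, pow_zero, mul_one] at this
      linarith
    obtain ⟨k, hk⟩ : ∃ k, Nat.find hex = k + 1 :=
      ⟨Nat.find hex - 1, (Nat.succ_pred_eq_of_ne_zero hm0).symm⟩
    have hm : a (k + 1) < q := by rw [← hk]; exact Nat.find_spec hex
    have hqk : q ≤ a k := not_lt.mp (Nat.find_min hex (by omega))
    refine le_trans ?_ (ENNReal.le_tsum k)
    have hmem : (s, y) ∈ T k := by
      constructor
      · constructor
        · exact hs
        · calc s = (s ^ (1 / α)) ^ α := by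
                rw [← Real.rpow_mul hs.le, one_div_mul_cancel hα0.ne', Real.rpow_one]
            _ ≤ (a k) ^ α :=
                Real.rpow_le_rpow (Real.rpow_nonneg hs.le _)
                  (le_trans (le_max_left _ _) hqk) hα0.le
      · rw [Metric.mem_closedBall, dist_zero_right]
        exact le_trans (le_max_right _ _) hqk
    rw [hG_def]
    dsimp only
    rw [Set.indicator_of_mem hmem]
    apply mul_le_mul_left
    refine le_trans (ker_le d hα1 hγ1 hs y) (ENNReal.ofReal_le_ofReal ?_)
    exact Real.rpow_le_rpow_of_nonpos (ha (k + 1)) hm.le he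
  -- integral bound per k
  have hGint : ∀ k, ∫⁻ p, G k p ≤ ENNReal.ofReal ((a (k + 1)) ^ e) *
      (volume (cylP d α (a k) t x) * M) := by
    intro k
    rw [hG_def]
    dsimp only
    rw [lintegral_indicator (hT_meas k), lintegral_const_mul _ hfof_meas]
    apply mul_le_mul_right
    have hsub : T k ⊆ Set.Icc 0 ((a k) ^ α) ×ˢ Metric.closedBall 0 (a k) :=
      Set.prod_mono Set.Ioc_subset_Icc_self subset_rfl
    have hpre : Set.Icc 0 ((a k) ^ α) ×ˢ Metric.closedBall (0 : Spc d) (a k) =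
        (fun p : ℝ × Spc d => (t + p.1, x + p.2)) ⁻¹' cylP d α (a k) t x := by
      ext ⟨s, y⟩
      simp only [Set.mem_prod, Set.mem_Icc, Metric.mem_closedBall, Set.mem_preimage, cylP,
        Set.mem_setOf_eq, dist_zero_right]
      constructor
      · rintro ⟨⟨hs0, hs1⟩, hy⟩
        refine ⟨by linarith, by linarith, ?_⟩
        have : dist (x + y) x = ‖y‖ := by rw [dist_eq_norm]; congr 1; abel
        rw [this]; exact hy
      · rintro ⟨hs0, hs1, hy⟩
        have : dist (x + y) x = ‖y‖ := by rw [dist_eq_norm]; congr 1; abel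
        rw [this] at hy
        exact ⟨⟨by linarith, by linarith⟩, hy⟩
    have hmp : MeasurePreserving (fun p : ℝ × Spc d => (t + p.1, x + p.2)) volume volume := by
      have h := (measurePreserving_add_left (volume : Measure ℝ) t).prod
        (measurePreserving_add_left (volume : Measure (Spc d)) x)
      rw [← MeasureTheory.Measure.volume_eq_prod] at h
      exact h
    have hmeasC : MeasurableSet (cylP d α (a k) t x) := by
      rw [cylP_prod]; exact measurableSet_Icc.prod measurableSet_closedBall
    calc ∫⁻ p in T k, fof p
        ≤ ∫⁻ p in Set.Icc 0 ((a k) ^ α) ×ˢ Metric.closedBall 0 (a k), fof p :=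
          lintegral_mono_set hsub
      _ = ∫⁻ z in cylP d α (a k) t x, ENNReal.ofReal (f z) := by
          rw [hpre]
          exact hmp.setLIntegral_comp_preimage hmeasC
            (ENNReal.measurable_ofReal.comp hf.measurable)
      _ = volume (cylP d α (a k) t x) * cylAvg d α (a k) t x (fun z => ENNReal.ofReal (f z)) := by
          rw [cylAvg, ← mul_assoc, ENNReal.mul_inv_cancel, one_mul]
          · rw [vol_cylP d α t x (ha k)]
            exact mul_ne_zero (by simp [Real.rpow_pos_of_pos (ha k)])
              (mul_ne_zero (by positivity) hB0.ne')
          · rw [vol_cylP d α t x (ha k)]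
            exact ENNReal.mul_ne_top ENNReal.ofReal_ne_top
              (ENNReal.mul_ne_top ENNReal.ofReal_ne_top hBt)
      _ ≤ volume (cylP d α (a k) t x) * M := by
          apply mul_le_mul_right
          rw [hM_def, maxFun]
          have : cylAvg d α (a k) t x (fun z => ENNReal.ofReal (f z)) =
              ENNReal.ofReal ((a k) ^ (0 : ℝ)) *
                cylAvg d α (a k) t x (fun z => ENNReal.ofReal (f z)) := by
            rw [Real.rpow_zero, ENNReal.ofReal_one, one_mul]
          rw [this]
          exact le_iSup₂ (f := fun r (_ : 0 < r) => ENNReal.ofReal (r ^ (0 : ℝ)) *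
            cylAvg d α r t x (fun z => ENNReal.ofReal (f z))) (a k) (ha k)
  -- per-k real computation
  have hreal : ∀ k : ℕ, (a (k + 1)) ^ e * ((a k) ^ α * (a k) ^ (d : ℕ)) =
      c2 * ρ ^ (α * γ / 2) * w ^ k := by
    intro k
    have hak : 0 < a k := ha k
    have e1 : (a (k + 1)) ^ e = (a k) ^ e * c2 := by
      have h1 : a (k + 1) = a k * 2⁻¹ := by
        rw [ha_def]; dsimp only; rw [pow_succ]; ring
      rw [h1, Real.mul_rpow hak.le (by norm_num), hc2_def]
    have e2 : (a k) ^ (d : ℕ) = (a k) ^ ((d : ℝ)) := (Real.rpow_natCast _ d).symm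
    have e3 : (a k) ^ e * ((a k) ^ α * (a k) ^ ((d : ℝ))) = (a k) ^ (α * γ / 2) := by
      rw [← Real.rpow_add hak, ← Real.rpow_add hak]
      congr 1
      rw [he_def]; ring
    have swap : ((2⁻¹ : ℝ) ^ k) ^ (α * γ / 2) = ((2⁻¹ : ℝ) ^ (α * γ / 2)) ^ k := by
      rw [← Real.rpow_natCast (2⁻¹ : ℝ) k,
        ← Real.rpow_natCast ((2⁻¹ : ℝ) ^ (α * γ / 2)) k,
        ← Real.rpow_mul (by norm_num : (0:ℝ) ≤ 2⁻¹),
        ← Real.rpow_mul (by norm_num : (0:ℝ) ≤ 2⁻¹), mul_comm]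
    have e4 : (a k) ^ (α * γ / 2) = ρ ^ (α * γ / 2) * w ^ k := by
      rw [ha_def]
      dsimp only
      rw [Real.mul_rpow hρ.le (by positivity), hw_def, swap]
    calc (a (k + 1)) ^ e * ((a k) ^ α * (a k) ^ (d : ℕ))
        = (a k) ^ e * ((a k) ^ α * (a k) ^ ((d : ℝ))) * c2 := by rw [e1, e2]; ring
      _ = (a k) ^ (α * γ / 2) * c2 := by rw [e3]
      _ = c2 * ρ ^ (α * γ / 2) * w ^ k := by rw [e4]; ring
  -- assemble
  rw [Pop]
  calc ∫⁻ p : ℝ × Spc d, pKer d α γ p.1 p.2 *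
        Set.indicator (cylP d α ρ t x) (fun w => ENNReal.ofReal (f w)) (t + p.1, x + p.2)
      ≤ ∫⁻ p, ∑' k, G k p := lintegral_mono hpt
    _ = ∑' k, ∫⁻ p, G k p := lintegral_tsum fun k =>
        ((measurable_const.mul hfof_meas).indicator (hT_meas k)).aemeasurable
    _ ≤ ∑' k, ENNReal.ofReal ((a (k + 1)) ^ e) * (volume (cylP d α (a k) t x) * M) :=
        ENNReal.tsum_le_tsum hGint
    _ = ∑' k, ENNReal.ofReal (c2 * ρ ^ (α * γ / 2) * w ^ k) * (B * M) := by
        congr 1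
        ext k
        rw [vol_cylP d α t x (ha k), ← hreal k]
        rw [ENNReal.ofReal_mul (Real.rpow_nonneg (ha (k+1)).le _),
          ENNReal.ofReal_mul (Real.rpow_nonneg (ha k).le _)]
        ring
    _ = ENNReal.ofReal (c2 * ρ ^ (α * γ / 2)) * (1 - ENNReal.ofReal w)⁻¹ * (B * M) := by
        rw [ENNReal.tsum_mul_right]
        congr 1
        calc ∑' k : ℕ, ENNReal.ofReal (c2 * ρ ^ (α * γ / 2) * w ^ k)
            = ∑' k : ℕ, ENNReal.ofReal (c2 * ρ ^ (α * γ / 2)) * (ENNReal.ofReal w) ^ k := by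
              congr 1
              ext k
              rw [ENNReal.ofReal_mul (by positivity), ENNReal.ofReal_pow hw0.le]
          _ = ENNReal.ofReal (c2 * ρ ^ (α * γ / 2)) * (1 - ENNReal.ofReal w)⁻¹ := by
              rw [ENNReal.tsum_mul_left, ENNReal.tsum_geometric]
    _ = ENNReal.ofReal (c2 * (1 - w)⁻¹ * B.toReal * ρ ^ (α * γ / 2)) * M := by
        have hw' : (1 - ENNReal.ofReal w)⁻¹ = ENNReal.ofReal ((1 - w)⁻¹) := by
          rw [ENNReal.ofReal_inv_of_pos (by linarith), ENNReal.ofReal_sub _ hw0.le,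
            ENNReal.ofReal_one]
        rw [hw',
          show c2 * (1 - w)⁻¹ * B.toReal * ρ ^ (α * γ / 2) =
            c2 * ρ ^ (α * γ / 2) * ((1 - w)⁻¹ * B.toReal) by ring,
          ENNReal.ofReal_mul (p := c2 * ρ ^ (α * γ / 2)) (by positivity),
          ENNReal.ofReal_mul (p := (1 - w)⁻¹) (le_of_lt (inv_pos.mpr h1w)),
          ENNReal.ofReal_toReal hBt]
        ring
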